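/- arXiv:1810.12438 — 4 statements merged into one kernel-verified Lean document; each statement's English description precedes it below -/
import Mathlib

section
/- Let X be a second countable Baire topological vector space and Γ a set of continuous linear operators on X. Then the set HC(Γ) of hypercyclic vectors for Γ is dense in X if and only if Γ is topologically transitive. In particular, every topologically transitive set of operators is hypercyclic. -/
theorem stmt_8 {X : Type*} [AddCommGroup X] [Module ℂ X] [TopologicalSpace X]
    [IsTopologicalAddGroup X] [ContinuousSMul ℂ X]
    [SecondCountableTopology X] [BaireSpace X]
    (Γ : Set (X →L[ℂ] X)) :
    (Dense {x : X | Dense ((fun T : X →L[ℂ] X => T x) '' Γ)} ↔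
      (∀ U V : Set X, IsOpen U → IsOpen V → U.Nonempty → V.Nonempty →
        ∃ T ∈ Γ, (T '' U ∩ V).Nonempty)) ∧
    ((∀ U V : Set X, IsOpen U → IsOpen V → U.Nonempty → V.Nonempty →
        ∃ T ∈ Γ, (T '' U ∩ V).Nonempty) →
      ∃ x : X, Dense ((fun T : X →L[ℂ] X => T x) '' Γ)) := by
  obtain ⟨B, hBc, -, hB⟩ := TopologicalSpace.exists_countable_basis X
  have key : (∀ U V : Set X, IsOpen U → IsOpen V → U.Nonempty → V.Nonempty →
      ∃ T ∈ Γ, (T '' U ∩ V).Nonempty) →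
      Dense {x : X | Dense ((fun T : X →L[ℂ] X => T x) '' Γ)} := by
    intro H
    have hset : {x : X | Dense ((fun T : X →L[ℂ] X => T x) '' Γ)} =
        ⋂ o ∈ {o ∈ B | o.Nonempty}, ⋃ T ∈ Γ, (T : X → X) ⁻¹' o := by
      ext x
      simp only [Set.mem_setOf_eq, Set.mem_iInter, Set.mem_iUnion, Set.mem_preimage,
        Set.mem_sep_iff, hB.dense_iff]
      constructor
      · rintro h o ⟨hoB, hone⟩
        obtain ⟨y, hy, T, hT, rfl⟩ := h o hoB hone
        exact ⟨T, hT, hy⟩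
      · rintro h o hoB hone
        obtain ⟨T, hT, hTx⟩ := h o ⟨hoB, hone⟩
        exact ⟨T x, hTx, T, hT, rfl⟩
    rw [hset]
    refine dense_biInter_of_isOpen (fun o ho => ?_) (hBc.mono (Set.sep_subset _ _))
      (fun o ho => ?_)
    · exact isOpen_biUnion fun T _ => (hB.isOpen ho.1).preimage T.continuous
    · rw [dense_iff_inter_open]
      intro U hU hUne
      obtain ⟨T, hT, y, ⟨u, hu, rfl⟩, hTuo⟩ := H U o hU (hB.isOpen ho.1) hUne ho.2
      exact ⟨u, hu, Set.mem_biUnion hT hTuo⟩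
  have fwd : Dense {x : X | Dense ((fun T : X →L[ℂ] X => T x) '' Γ)} →
      ∀ U V : Set X, IsOpen U → IsOpen V → U.Nonempty → V.Nonempty →
        ∃ T ∈ Γ, (T '' U ∩ V).Nonempty := by
    intro h U V hU hV hUne hVne
    obtain ⟨x, hxU, hx⟩ := h.inter_open_nonempty U hU hUne
    obtain ⟨y, hyV, T, hT, rfl⟩ := hx.inter_open_nonempty V hV hVne
    exact ⟨T, hT, T x, ⟨x, hxU, rfl⟩, hyV⟩
  refine ⟨⟨fwd, key⟩, fun H => ?_⟩
  have : Nonempty X := ⟨0⟩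
  obtain ⟨x, hx⟩ := (key H).nonempty
  exact ⟨x, hx⟩
end

section
/- Let X be a second countable Baire complex topological vector space and Γ ⊆ B(X). Suppose there exist dense subsets X₀, Y₀ of X, a sequence (T_k) in Γ, and maps S_k : Y₀ → X such that T_k x → 0 for all x ∈ X₀, S_k y → 0 for all y ∈ Y₀, and T_k S_k y → y for all y ∈ Y₀. Then Γ is topologically transitive (and hence hypercyclic). -/
open Filter Topology

theorem stmt_10 {X : Type*} [AddCommGroup X] [Module ℂ X] [TopologicalSpace X]
    [IsTopologicalAddGroup X] [ContinuousSMul ℂ X]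
    [SecondCountableTopology X] [BaireSpace X]
    (Γ : Set (X →L[ℂ] X)) (X₀ Y₀ : Set X) (hX₀ : Dense X₀) (hY₀ : Dense Y₀)
    (Tk : ℕ → X →L[ℂ] X) (hTk : ∀ k, Tk k ∈ Γ)
    (Sk : ℕ → X → X)
    (h1 : ∀ x ∈ X₀, Tendsto (fun k => Tk k x) atTop (𝓝 0))
    (h2 : ∀ y ∈ Y₀, Tendsto (fun k => Sk k y) atTop (𝓝 0))
    (h3 : ∀ y ∈ Y₀, Tendsto (fun k => Tk k (Sk k y)) atTop (𝓝 y)) :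
    (∀ U V : Set X, IsOpen U → IsOpen V → U.Nonempty → V.Nonempty →
      ∃ T ∈ Γ, (T '' U ∩ V).Nonempty) ∧
    ∃ x : X, Dense ((fun T : X →L[ℂ] X => T x) '' Γ) := by
  have trans : ∀ U V : Set X, IsOpen U → IsOpen V → U.Nonempty → V.Nonempty →
      ∃ T ∈ Γ, (T '' U ∩ V).Nonempty := by
    intro U V hU hV hUne hVne
    obtain ⟨x, hxX₀, hxU⟩ := hX₀.exists_mem_open hU hUne
    obtain ⟨y, hyY₀, hyV⟩ := hY₀.exists_mem_open hV hVne
    have ha : Tendsto (fun k => x + Sk k y) atTop (𝓝 x) := by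
      simpa using tendsto_const_nhds.add (h2 y hyY₀)
    have hb : Tendsto (fun k => Tk k (x + Sk k y)) atTop (𝓝 y) := by
      have heq : (fun k => Tk k (x + Sk k y)) = fun k => Tk k x + Tk k (Sk k y) := by
        ext k; simp [map_add]
      rw [heq]
      simpa using (h1 x hxX₀).add (h3 y hyY₀)
    have h4 : ∀ᶠ k in atTop, x + Sk k y ∈ U := ha (hU.mem_nhds hxU)
    have h5 : ∀ᶠ k in atTop, Tk k (x + Sk k y) ∈ V := hb (hV.mem_nhds hyV)
    obtain ⟨k, hk1, hk2⟩ := (h4.and h5).exists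
    exact ⟨Tk k, hTk k, Tk k (x + Sk k y), ⟨_, hk1, rfl⟩, hk2⟩
  refine ⟨trans, ?_⟩
  obtain ⟨b, hbc, hbne, hbasis⟩ := TopologicalSpace.exists_countable_basis X
  have hGopen : ∀ V ∈ b, IsOpen (⋃ T ∈ Γ, (T : X →L[ℂ] X) ⁻¹' V) := fun V hV =>
    isOpen_biUnion fun T _ => (hbasis.isOpen hV).preimage T.continuous
  have hGdense : ∀ V ∈ b, Dense (⋃ T ∈ Γ, (T : X →L[ℂ] X) ⁻¹' V) := by
    intro V hV
    rw [dense_iff_inter_open]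
    intro U hU hUne
    have hVne : V.Nonempty := Set.nonempty_iff_ne_empty.2 (fun h => hbne (h ▸ hV))
    obtain ⟨T, hTΓ, z, ⟨u, huU, rfl⟩, hzV⟩ := trans U V hU (hbasis.isOpen hV) hUne hVne
    exact ⟨u, huU, Set.mem_biUnion hTΓ hzV⟩
  have hd : Dense (⋂ V ∈ b, ⋃ T ∈ Γ, (T : X →L[ℂ] X) ⁻¹' V) :=
    dense_biInter_of_isOpen hGopen hbc hGdense
  obtain ⟨x, hx⟩ := hd.nonempty
  refine ⟨x, hbasis.dense_iff.2 ?_⟩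
  intro o ho hone
  have : x ∈ ⋃ T ∈ Γ, (T : X →L[ℂ] X) ⁻¹' o := by
    exact Set.mem_iInter₂.1 hx o ho
  obtain ⟨T, hTΓ, hxo⟩ := Set.mem_iUnion₂.1 this
  exact ⟨T x, hxo, T, hTΓ, rfl⟩
end

section
/- Let (S(z))_{z∈ℂ} be an entire C-regularized group on a topological vector space X such that C has dense range. If the family {S(z) : z ∈ ℂ} is hypercyclic (some vector has dense orbit), then it is topologically transitive: for all nonempty open sets U, V ⊆ X there exists z ∈ ℂ with S(z)(V) ∩ U ≠ ∅. -/
theorem stmt_12 {X : Type*} [AddCommGroup X] [Module ℂ X] [TopologicalSpace X]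
    [IsTopologicalAddGroup X] [ContinuousSMul ℂ X]
    (S : ℂ → X →L[ℂ] X) (C : X →L[ℂ] X)
    (hS0 : S 0 = C)
    (hgrp : ∀ z w : ℂ, (S (z + w)).comp C = (S z).comp (S w))
    (hC : DenseRange C)
    (hhyp : ∃ x : X, Dense (Set.range fun z : ℂ => S z x)) :
    ∀ U V : Set X, IsOpen U → IsOpen V → U.Nonempty → V.Nonempty →
      ∃ z : ℂ, (S z '' V ∩ U).Nonempty := by
  obtain ⟨x, hx⟩ := hhyp
  intro U V hU hV hUne hVne
  -- C commutes with S z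
  have hcomm : ∀ z : ℂ, C.comp (S z) = (S z).comp C := by
    intro z
    have := hgrp 0 z
    rw [zero_add, hS0] at this
    exact this.symm
  -- pick z₂ with S z₂ x ∈ V
  obtain ⟨v, ⟨z₂, hz₂⟩, hvV⟩ := hx.exists_mem_open hV hVne
  -- C '' orbit is dense
  have hdense2 : Dense (C '' Set.range fun z : ℂ => S z x) :=
    hC.dense_image C.continuous hx
  obtain ⟨u, ⟨y, ⟨z₁, hz₁⟩, hy⟩, huU⟩ := hdense2.exists_mem_open hU hUne
  refine ⟨z₁ - z₂, S (z₁ - z₂) v, ⟨⟨v, hvV, rfl⟩, ?_⟩⟩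
  have key : (S (z₁ - z₂)).comp (S z₂) = (S z₁).comp C := by
    have := hgrp (z₁ - z₂) z₂
    rw [sub_add_cancel] at this; exact this.symm
  have : S (z₁ - z₂) v = C (S z₁ x) := by
    rw [← hz₂]
    have h1 : S (z₁ - z₂) (S z₂ x) = S z₁ (C x) :=
      congrFun (congrArg (fun f : X →L[ℂ] X => (f : X → X)) key) x
    have h2 : C (S z₁ x) = S z₁ (C x) :=
      congrFun (congrArg (fun f : X →L[ℂ] X => (f : X → X)) (hcomm z₁)) x
    rw [h1, h2]
  rw [this]
  rw [← hz₁] at hy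
  rwa [hy]
end

section
/- Let X be a topological space that is not necessarily without isolated points and Γ ⊆ B(X) a hypercyclic set of operators such that for all T, S ∈ Γ with T ≠ S there exists A ∈ Γ with T = A ∘ S. Then Γ ∪ {Id} is topologically transitive. -/
theorem stmt_17 {X : Type*} [AddCommGroup X] [Module ℂ X] [TopologicalSpace X]
    [IsTopologicalAddGroup X] [ContinuousSMul ℂ X]
    (Γ : Set (X →L[ℂ] X))
    (hhyp : ∃ x : X, Dense ((fun T : X →L[ℂ] X => T x) '' Γ))
    (hfac : ∀ T ∈ Γ, ∀ S ∈ Γ, T ≠ S → ∃ A ∈ Γ, ∀ x : X, T x = A (S x)) :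
    ∀ U V : Set X, IsOpen U → IsOpen V → U.Nonempty → V.Nonempty →
      ∃ T ∈ Γ ∪ {ContinuousLinearMap.id ℂ X}, (T '' U ∩ V).Nonempty := by
  intro U V hU hV hUne hVne
  obtain ⟨x, hx⟩ := hhyp
  obtain ⟨u, hu, huU⟩ := hx.exists_mem_open hU hUne
  obtain ⟨v, hv, hvV⟩ := hx.exists_mem_open hV hVne
  obtain ⟨S, hS, rfl⟩ := hu
  obtain ⟨T, hT, rfl⟩ := hv
  by_cases hTS : T = S
  · refine ⟨ContinuousLinearMap.id ℂ X, Or.inr rfl, S x, ⟨⟨S x, huU, rfl⟩, ?_⟩⟩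
    rw [hTS] at hvV; exact hvV
  · obtain ⟨A, hA, hAx⟩ := hfac T hT S hS hTS
    exact ⟨A, Or.inl hA, A (S x), ⟨S x, huU, rfl⟩, (hAx x) ▸ hvV⟩
end
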